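/- For q ∈ (0,1], let X₂ := q|φ₂⁺⟩⟨φ₂⁺| + (1−q)|01⟩⟨01| on ℂ² ⊗ ℂ². Then F(X₂) ≤ 1/2 if and only if q ≤ 1/2. -/
import Mathlib


open Matrix Kronecker Complex
open scoped ComplexOrder

/-- The canonical maximally entangled vector `|ψ⁺⟩ = (1/√d) ∑ᵢ |ii⟩` on `ℂ^d ⊗ ℂ^d`. -/
noncomputable def psiPlus (d : ℕ) : (Fin d × Fin d) → ℂ :=
  fun p => if p.1 = p.2 then ((Real.sqrt d)⁻¹ : ℝ) else 0

/-- The fully entangled fraction: the supremum over `d × d` unitaries `V` of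
`⟨ψ⁺| (I ⊗ V)† ρ (I ⊗ V) |ψ⁺⟩`. -/
noncomputable def fef (d : ℕ) (ρ : Matrix (Fin d × Fin d) (Fin d × Fin d) ℂ) : ℝ :=
  ⨆ V : Matrix.unitaryGroup (Fin d) ℂ,
    (star (psiPlus d) ⬝ᵥ
      ((((1 : Matrix (Fin d) (Fin d) ℂ) ⊗ₖ (V : Matrix (Fin d) (Fin d) ℂ))ᴴ * ρ *
        ((1 : Matrix (Fin d) (Fin d) ℂ) ⊗ₖ (V : Matrix (Fin d) (Fin d) ℂ))) *ᵥ psiPlus d)).re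

/-- A density matrix: positive semidefinite with unit trace. -/
def IsDensityMatrix {n : Type*} [Fintype n] (ρ : Matrix n n ℂ) : Prop :=
  ρ.PosSemidef ∧ ρ.trace = 1

/-- `ρ` has absolute fully entangled fraction: `F(UρU†) ≤ 1/d` for every unitary `U`. -/
def AbsFEF (d : ℕ) (ρ : Matrix (Fin d × Fin d) (Fin d × Fin d) ℂ) : Prop :=
  ∀ U ∈ Matrix.unitaryGroup (Fin d × Fin d) ℂ, fef d (U * ρ * Uᴴ) ≤ 1 / d

/-- Basis vector `|ij⟩` of `ℂ^d ⊗ ℂ^d`. -/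
def ket (d : ℕ) (i j : Fin d) : (Fin d × Fin d) → ℂ :=
  fun p => if p = (i, j) then 1 else 0

/-- Rank-one projector `|v⟩⟨v|`. -/
def proj {n : Type*} (v : n → ℂ) : Matrix n n ℂ :=
  Matrix.vecMulVec v (star v)

/-- The state `X₂ = q|φ₂⁺⟩⟨φ₂⁺| + (1−q)|01⟩⟨01|`. -/
noncomputable def X₂ (q : ℝ) : Matrix (Fin 2 × Fin 2) (Fin 2 × Fin 2) ℂ :=
  (q : ℂ) • proj (psiPlus 2) + ((1 - q : ℝ) : ℂ) • proj (ket 2 0 1)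

set_option maxHeartbeats 2000000 in
lemma fef_term_eq (q : ℝ) (V : Matrix (Fin 2) (Fin 2) ℂ) :
    (star (psiPlus 2) ⬝ᵥ
      ((((1 : Matrix (Fin 2) (Fin 2) ℂ) ⊗ₖ V)ᴴ * X₂ q *
        ((1 : Matrix (Fin 2) (Fin 2) ℂ) ⊗ₖ V)) *ᵥ psiPlus 2)).re =
    q/4 * Complex.normSq (V 0 0 + V 1 1) + (1-q)/2 * Complex.normSq (V 1 0) := by
  have h2 : Real.sqrt 2 * Real.sqrt 2 = 2 := Real.mul_self_sqrt (by norm_num)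
  simp only [X₂, proj, psiPlus, ket, Matrix.mul_apply, Matrix.mulVec, dotProduct,
    Fintype.sum_prod_type, Fin.sum_univ_two, Matrix.kroneckerMap_apply, Matrix.one_apply,
    Matrix.conjTranspose_apply, Matrix.add_apply, Matrix.smul_apply, Matrix.vecMulVec_apply,
    Pi.star_apply, Prod.mk.injEq]
  norm_num [Prod.ext_iff, Complex.normSq_apply, Complex.ext_iff]
  ring_nf
  simp only [show ((Real.sqrt 2)^2:ℝ) = 2 by rw [sq]; exact h2,
    show ((Real.sqrt 2)^4:ℝ) = 4 by nlinarith [h2]]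
  ring

lemma unitary_normSq₁ (V : Matrix.unitaryGroup (Fin 2) ℂ) :
    Complex.normSq ((V : Matrix (Fin 2) (Fin 2) ℂ) 0 0) +
      Complex.normSq ((V : Matrix (Fin 2) (Fin 2) ℂ) 1 0) = 1 := by
  have h : star (V : Matrix (Fin 2) (Fin 2) ℂ) * V = 1 := V.2.1
  have := congrFun (congrFun h 0) 0
  simp only [Matrix.mul_apply, Fin.sum_univ_two, Matrix.one_apply, Matrix.star_apply,
    Matrix.conjTranspose_apply, if_pos rfl] at this
  have hre := congrArg Complex.re this
  simp [Complex.normSq_apply, Complex.mul_re] at hre ⊢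
  linarith [hre]

lemma unitary_normSq₂ (V : Matrix.unitaryGroup (Fin 2) ℂ) :
    Complex.normSq ((V : Matrix (Fin 2) (Fin 2) ℂ) 1 0) +
      Complex.normSq ((V : Matrix (Fin 2) (Fin 2) ℂ) 1 1) = 1 := by
  have h : (V : Matrix (Fin 2) (Fin 2) ℂ) * star (V : Matrix (Fin 2) (Fin 2) ℂ) = 1 := V.2.2
  have := congrFun (congrFun h 1) 1
  simp only [Matrix.mul_apply, Fin.sum_univ_two, Matrix.one_apply, Matrix.star_apply,
    Matrix.conjTranspose_apply, if_pos rfl] at this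
  have hre := congrArg Complex.re this
  simp [Complex.normSq_apply, Complex.mul_re] at hre ⊢
  linarith [hre]

/-- For `q ∈ (0,1]`, the fully entangled fraction of `X₂` is at most `1/2` iff `q ≤ 1/2`. -/
theorem fef_X₂_le_half_iff (q : ℝ) (hq0 : 0 < q) (hq1 : q ≤ 1) :
    fef 2 (X₂ q) ≤ 1/2 ↔ q ≤ 1/2 := by
  haveI : Nonempty (Matrix.unitaryGroup (Fin 2) ℂ) := ⟨1⟩
  have hval : ∀ V : Matrix.unitaryGroup (Fin 2) ℂ,
      (star (psiPlus 2) ⬝ᵥ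
        ((((1 : Matrix (Fin 2) (Fin 2) ℂ) ⊗ₖ (V : Matrix (Fin 2) (Fin 2) ℂ))ᴴ * X₂ q *
          ((1 : Matrix (Fin 2) (Fin 2) ℂ) ⊗ₖ (V : Matrix (Fin 2) (Fin 2) ℂ))) *ᵥ psiPlus 2)).re =
      q/4 * Complex.normSq ((V : Matrix (Fin 2) (Fin 2) ℂ) 0 0 + (V : Matrix (Fin 2) (Fin 2) ℂ) 1 1)
        + (1-q)/2 * Complex.normSq ((V : Matrix (Fin 2) (Fin 2) ℂ) 1 0) :=
    fun V => fef_term_eq q (V : Matrix (Fin 2) (Fin 2) ℂ)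
  have hbdd : BddAbove (Set.range fun V : Matrix.unitaryGroup (Fin 2) ℂ =>
      (star (psiPlus 2) ⬝ᵥ
        ((((1 : Matrix (Fin 2) (Fin 2) ℂ) ⊗ₖ (V : Matrix (Fin 2) (Fin 2) ℂ))ᴴ * X₂ q *
          ((1 : Matrix (Fin 2) (Fin 2) ℂ) ⊗ₖ (V : Matrix (Fin 2) (Fin 2) ℂ))) *ᵥ psiPlus 2)).re) := by
    refine ⟨1, Set.forall_mem_range.mpr fun V => ?_⟩
    rw [hval V]
    have h1 := unitary_normSq₁ V
    have h2 := unitary_normSq₂ V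
    set a := (V : Matrix (Fin 2) (Fin 2) ℂ) 0 0
    set d := (V : Matrix (Fin 2) (Fin 2) ℂ) 1 1
    set c := (V : Matrix (Fin 2) (Fin 2) ℂ) 1 0
    simp only [Complex.normSq_apply, Complex.add_re, Complex.add_im] at h1 h2 ⊢
    nlinarith [sq_nonneg (a.re - d.re), sq_nonneg (a.im - d.im), sq_nonneg a.re, sq_nonneg a.im,
      sq_nonneg c.re, sq_nonneg c.im, sq_nonneg d.re, sq_nonneg d.im]
  constructor
  · intro h
    have hle : (star (psiPlus 2) ⬝ᵥ
        ((((1 : Matrix (Fin 2) (Fin 2) ℂ) ⊗ₖ ((1 : Matrix.unitaryGroup (Fin 2) ℂ) : Matrix (Fin 2) (Fin 2) ℂ))ᴴ * X₂ q *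
          ((1 : Matrix (Fin 2) (Fin 2) ℂ) ⊗ₖ ((1 : Matrix.unitaryGroup (Fin 2) ℂ) : Matrix (Fin 2) (Fin 2) ℂ))) *ᵥ psiPlus 2)).re
        ≤ fef 2 (X₂ q) := le_ciSup hbdd 1
    rw [hval 1] at hle
    have hone : ((1 : Matrix.unitaryGroup (Fin 2) ℂ) : Matrix (Fin 2) (Fin 2) ℂ) = 1 := rfl
    rw [hone] at hle
    simp [Matrix.one_apply, Complex.normSq_apply] at hle
    norm_num at hle
    linarith
  · intro hq
    refine ciSup_le fun V => ?_
    rw [hval V]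
    have h1 := unitary_normSq₁ V
    have h2 := unitary_normSq₂ V
    set a := (V : Matrix (Fin 2) (Fin 2) ℂ) 0 0
    set d := (V : Matrix (Fin 2) (Fin 2) ℂ) 1 1
    set c := (V : Matrix (Fin 2) (Fin 2) ℂ) 1 0
    simp only [Complex.normSq_apply, Complex.add_re, Complex.add_im] at h1 h2 ⊢
    nlinarith [sq_nonneg (a.re - d.re), sq_nonneg (a.im - d.im), sq_nonneg a.re, sq_nonneg a.im,
      sq_nonneg c.re, sq_nonneg c.im, sq_nonneg d.re, sq_nonneg d.im,
      mul_nonneg (by linarith : (0:ℝ) ≤ 1 - 2*q) (by nlinarith [sq_nonneg a.re, sq_nonneg a.im] : (0:ℝ) ≤ a.re^2 + a.im^2)]
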